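/- arXiv:2202.01424 — 2 statements merged into one kernel-verified Lean document; each statement's English description precedes it below -/
import Mathlib

section
/- The function N₂(z) = z·cos(√|z|) is a Nussbaum function: sup over k>k₀ of (1/(k−k₀))∫_{k₀}^{k} N₂(τ)dτ = +∞ and the corresponding infimum is −∞. -/
open Real intervalIntegral

noncomputable def Fa (x : ℝ) : ℝ :=
  2*((Real.sqrt x)^3 * Real.sin (Real.sqrt x) + 3*x*Real.cos (Real.sqrt x)
    - 6*Real.sqrt x*Real.sin (Real.sqrt x) - 6*Real.cos (Real.sqrt x))

lemma Fa_deriv {τ : ℝ} (hτ : 0 < τ) :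
    HasDerivAt Fa (τ * Real.cos (Real.sqrt τ)) τ := by
  have hs : HasDerivAt Real.sqrt (1/(2*Real.sqrt τ)) τ := Real.hasDerivAt_sqrt hτ.ne'
  have hsin : HasDerivAt (fun x => Real.sin (Real.sqrt x))
      (Real.cos (Real.sqrt τ) * (1/(2*Real.sqrt τ))) τ :=
    (Real.hasDerivAt_sin _).comp τ hs
  have hcos : HasDerivAt (fun x => Real.cos (Real.sqrt x))
      (-Real.sin (Real.sqrt τ) * (1/(2*Real.sqrt τ))) τ :=
    (Real.hasDerivAt_cos _).comp τ hs
  have h1 := ((hs.pow 3).mul hsin)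
  have h2 := ((hasDerivAt_id τ).const_mul (3:ℝ)).mul hcos
  have h3 := (hs.const_mul (6:ℝ)).mul hsin
  have h4 := hcos.const_mul (6:ℝ)
  have h := (((h1.add h2).sub h3).sub h4).const_mul (2:ℝ)
  refine h.congr_deriv (Eq.symm ?_)
  have hsq : Real.sqrt τ * Real.sqrt τ = τ := Real.mul_self_sqrt hτ.le
  have hne : Real.sqrt τ ≠ 0 := by positivity
  simp only [Pi.pow_apply, id]
  norm_num
  field_simp
  linear_combination (-(Real.cos (Real.sqrt τ) * Real.sqrt τ) - 3 * Real.sin (Real.sqrt τ)) * hsq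

lemma cont_integrand : Continuous (fun τ : ℝ => τ * Real.cos (Real.sqrt |τ|)) := by
  fun_prop

lemma integral_eval {a k : ℝ} (ha : 0 < a) (hak : a ≤ k) :
    (∫ τ in a..k, τ * Real.cos (Real.sqrt |τ|)) = Fa k - Fa a := by
  have h1 : (∫ τ in a..k, τ * Real.cos (Real.sqrt |τ|))
      = ∫ τ in a..k, τ * Real.cos (Real.sqrt τ) := by
    apply intervalIntegral.integral_congr
    intro x hx
    rw [Set.uIcc_of_le hak] at hx
    show x * Real.cos (Real.sqrt |x|) = x * Real.cos (Real.sqrt x)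
    rw [abs_of_pos (lt_of_lt_of_le ha hx.1)]
  rw [h1]
  apply intervalIntegral.integral_eq_sub_of_hasDerivAt
  · intro x hx
    rw [Set.uIcc_of_le hak] at hx
    exact Fa_deriv (lt_of_lt_of_le ha hx.1)
  · apply Continuous.intervalIntegrable
    fun_prop

lemma exists_sincos (ε : ℝ) (hε : ε = 1 ∨ ε = -1) (S : ℝ) :
    ∃ s : ℝ, S ≤ s ∧ 0 ≤ s ∧ Real.sin s = ε ∧ Real.cos s = 0 := by
  obtain ⟨n, hn⟩ := exists_nat_ge S
  have hpi : (3:ℝ) < π := Real.pi_gt_three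
  have hge : (n:ℝ) ≤ (n:ℝ) * (2*π) := by nlinarith [Nat.cast_nonneg (α := ℝ) n]
  rcases hε with rfl | rfl
  · refine ⟨π/2 + n * (2*π), by nlinarith, by positivity, ?_, ?_⟩
    · rw [Real.sin_add_nat_mul_two_pi, Real.sin_pi_div_two]
    · rw [Real.cos_add_nat_mul_two_pi, Real.cos_pi_div_two]
  · refine ⟨(π + π/2) + n * (2*π), by nlinarith, by positivity, ?_, ?_⟩
    · rw [Real.sin_add_nat_mul_two_pi, Real.sin_add]; simp
    · rw [Real.cos_add_nat_mul_two_pi, Real.cos_add]; simp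

set_option maxHeartbeats 1000000 in
lemma core (k₀ M ε : ℝ) (hε : ε = 1 ∨ ε = -1) :
    ∃ k > k₀, ε * (M * (k - k₀)) < ε * ∫ τ in k₀..k, τ * Real.cos (Real.sqrt |τ|) := by
  set a : ℝ := max k₀ 0 + 1 with ha_def
  have ha0 : 0 < a := by positivity
  have hak₀ : k₀ < a := lt_of_le_of_lt (le_max_left _ _) (by linarith)
  set C : ℝ := (∫ τ in k₀..a, τ * Real.cos (Real.sqrt |τ|)) - Fa a with hC
  obtain ⟨s, hsS, hs0, hsin, hcos⟩ :=
    exists_sincos ε hε (|C| + |M| + |M| * |k₀| + |k₀| + a + 14)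
  have habs : (0:ℝ) ≤ |C| + |M| + |M| * |k₀| + |k₀| := by positivity
  have hs1 : 1 ≤ s := by nlinarith
  have hsk₀ : k₀ < s := by
    have : k₀ ≤ |k₀| := le_abs_self _
    nlinarith [abs_nonneg C, abs_nonneg M, abs_nonneg (M * k₀), mul_nonneg (abs_nonneg M) (abs_nonneg k₀)]
  have hk : k₀ < s^2 := by nlinarith
  refine ⟨s^2, hk, ?_⟩
  have hsa : a ≤ s^2 := by nlinarith [abs_nonneg C, abs_nonneg M, mul_nonneg (abs_nonneg M) (abs_nonneg k₀), abs_nonneg k₀]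
  have hi1 : IntervalIntegrable (fun τ : ℝ => τ * Real.cos (Real.sqrt |τ|)) MeasureTheory.volume k₀ a :=
    cont_integrand.intervalIntegrable _ _
  have hi2 : IntervalIntegrable (fun τ : ℝ => τ * Real.cos (Real.sqrt |τ|)) MeasureTheory.volume a (s^2) :=
    cont_integrand.intervalIntegrable _ _
  have hint : (∫ τ in k₀..s^2, τ * Real.cos (Real.sqrt |τ|))
      = (∫ τ in k₀..a, τ * Real.cos (Real.sqrt |τ|)) + ∫ τ in a..s^2, τ * Real.cos (Real.sqrt |τ|) :=
    (intervalIntegral.integral_add_adjacent_intervals hi1 hi2).symm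
  have heval : (∫ τ in a..s^2, τ * Real.cos (Real.sqrt |τ|)) = Fa (s^2) - Fa a :=
    integral_eval ha0 hsa
  have hFs : Fa (s^2) = ε * (2*s^3 - 12*s) := by
    unfold Fa
    rw [Real.sqrt_sq hs0, hsin, hcos]
    ring
  rw [hint, heval, hFs]
  have hKey : ε * ((∫ τ in k₀..a, τ * Real.cos (Real.sqrt |τ|)) + (ε * (2*s^3 - 12*s) - Fa a))
      = ε * C + (2*s^3 - 12*s) := by
    rw [hC]; rcases hε with rfl | rfl <;> ring
  rw [hKey]
  have hεC : -|C| ≤ ε * C := by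
    rcases hε with rfl | rfl
    · simpa using neg_abs_le C
    · simpa using le_abs_self C
  have hεM : ε * M ≤ |M| := by
    rcases hε with rfl | rfl
    · simpa using le_abs_self M
    · simpa using neg_le_abs M
  have hbound : ε * (M * (s^2 - k₀)) ≤ |M| * (s^2 - k₀) := by
    have := mul_le_mul_of_nonneg_right hεM (by nlinarith : (0:ℝ) ≤ s^2 - k₀)
    linarith [this]
  have hk₀abs : -|k₀| ≤ k₀ := neg_abs_le k₀
  have hM0 : 0 ≤ |M| := abs_nonneg M
  have hC0 : 0 ≤ |C| := abs_nonneg C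
  have hMk : 0 ≤ |M| * |k₀| := mul_nonneg hM0 (abs_nonneg k₀)
  -- need: |M| * (s^2 - k₀) < ε*C + 2*s^3 - 12*s
  have hcube : (|M| + 13) * s^2 ≤ s * s^2 := by
    apply mul_le_mul_of_nonneg_right _ (sq_nonneg s)
    nlinarith [abs_nonneg k₀]
  have hsbig : |C| + |M| * |k₀| + 1 ≤ s := by nlinarith [abs_nonneg k₀]
  nlinarith [sq_nonneg s, mul_le_mul_of_nonneg_right hs1 (sq_nonneg s), sq_nonneg (s-1), mul_nonneg (mul_nonneg hM0 (abs_nonneg k₀)) hs0]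

theorem stmt_2 (k₀ : ℝ) (M : ℝ) :
    (∃ k > k₀, (1 / (k - k₀)) * ∫ τ in k₀..k, τ * Real.cos (Real.sqrt |τ|) > M) ∧
    (∃ k > k₀, (1 / (k - k₀)) * ∫ τ in k₀..k, τ * Real.cos (Real.sqrt |τ|) < M) := by
  constructor
  · obtain ⟨k, hk, h⟩ := core k₀ M 1 (Or.inl rfl)
    refine ⟨k, hk, ?_⟩
    have hpos : 0 < k - k₀ := sub_pos.mpr hk
    rw [gt_iff_lt, one_div, inv_mul_eq_div, lt_div_iff₀ hpos]
    nlinarith [h]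
  · obtain ⟨k, hk, h⟩ := core k₀ M (-1) (Or.inr rfl)
    refine ⟨k, hk, ?_⟩
    have hpos : 0 < k - k₀ := sub_pos.mpr hk
    rw [one_div, inv_mul_eq_div, div_lt_iff₀ hpos]
    nlinarith [h]
end

section
/- The function N₄(z) = cos(πz/2)·exp(z²) is a Nussbaum function. -/
noncomputable def N4 : ℝ → ℝ := fun τ => Real.cos (Real.pi * τ / 2) * Real.exp (τ ^ 2)

lemma N4_cont : Continuous N4 := by
  unfold N4
  exact (Real.continuous_cos.comp (by continuity)).mul (Real.continuous_exp.comp (by continuity))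

lemma N4_int (a b : ℝ) : IntervalIntegrable N4 MeasureTheory.volume a b :=
  N4_cont.intervalIntegrable a b

lemma cos_shift (n : ℕ) (s : ℝ) :
    Real.cos (Real.pi * (s + 4*n) / 2) = Real.cos (Real.pi * s / 2) := by
  have h : Real.pi * (s + 4*n) / 2 = Real.pi * s / 2 + n * (2 * Real.pi) := by ring
  rw [h, Real.cos_add_nat_mul_two_pi]

lemma cos_quarter {x : ℝ} (hx : |x| ≤ 1/2) :
    Real.sqrt 2 / 2 ≤ Real.cos (Real.pi * x / 2) := by
  rw [← Real.cos_pi_div_four, ← Real.cos_abs (Real.pi * x / 2)]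
  apply Real.cos_le_cos_of_nonneg_of_le_pi (abs_nonneg _) (by nlinarith [Real.pi_pos])
  rw [abs_le] at hx ⊢
  constructor <;> nlinarith [Real.pi_pos, hx.1, hx.2]

lemma cos_nonneg_unit {x : ℝ} (hx : |x| ≤ 1) : 0 ≤ Real.cos (Real.pi * x / 2) := by
  apply Real.cos_nonneg_of_mem_Icc
  rw [abs_le] at hx
  constructor <;> nlinarith [Real.pi_pos, hx.1, hx.2]

lemma sqrt2_half_pos : (0:ℝ) < Real.sqrt 2 / 2 := by positivity

-- N4 is nonneg on [4n-1, 4n+1]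
lemma N4_nonneg (n : ℕ) {τ : ℝ} (h1 : 4*(n:ℝ) - 1 ≤ τ) (h2 : τ ≤ 4*(n:ℝ) + 1) :
    0 ≤ N4 τ := by
  unfold N4
  have hτ : τ = (τ - 4*n) + 4*n := by ring
  rw [hτ, cos_shift]
  have : |τ - 4*(n:ℝ)| ≤ 1 := by rw [abs_le]; constructor <;> linarith
  exact mul_nonneg (cos_nonneg_unit this) (Real.exp_nonneg _)

lemma N4_big (n : ℕ) (hn : 1 ≤ n) {τ : ℝ} (h1 : 4*(n:ℝ) - 1/2 ≤ τ) (h2 : τ ≤ 4*(n:ℝ) + 1/2) :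
    Real.sqrt 2 / 2 * Real.exp ((4*(n:ℝ) - 1/2)^2) ≤ N4 τ := by
  have hn' : (1:ℝ) ≤ (n:ℝ) := by exact_mod_cast hn
  have hc : Real.sqrt 2 / 2 ≤ Real.cos (Real.pi * τ / 2) := by
    have hτ : τ = (τ - 4*n) + 4*n := by ring
    rw [hτ, cos_shift]
    apply cos_quarter
    rw [abs_le]; constructor <;> linarith
  have he : Real.exp ((4*(n:ℝ) - 1/2)^2) ≤ Real.exp (τ^2) := by
    apply Real.exp_le_exp.2
    nlinarith
  exact mul_le_mul hc he (Real.exp_nonneg _) (le_trans sqrt2_half_pos.le hc)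

lemma hump_pos (n : ℕ) (hn : 1 ≤ n) :
    Real.sqrt 2 / 2 * Real.exp ((4*(n:ℝ) - 1/2)^2) ≤
      ∫ τ in (4*(n:ℝ)-1)..(4*(n:ℝ)+1), N4 τ := by
  have hs : ∫ τ in (4*(n:ℝ)-1)..(4*(n:ℝ)+1), N4 τ =
      (∫ τ in (4*(n:ℝ)-1)..(4*(n:ℝ)-1/2), N4 τ) +
      (∫ τ in (4*(n:ℝ)-1/2)..(4*(n:ℝ)+1/2), N4 τ) +
      (∫ τ in (4*(n:ℝ)+1/2)..(4*(n:ℝ)+1), N4 τ) := by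
    rw [intervalIntegral.integral_add_adjacent_intervals (N4_int _ _) (N4_int _ _),
        intervalIntegral.integral_add_adjacent_intervals (N4_int _ _) (N4_int _ _)]
  have h1 : 0 ≤ ∫ τ in (4*(n:ℝ)-1)..(4*(n:ℝ)-1/2), N4 τ := by
    apply intervalIntegral.integral_nonneg (by linarith)
    intro u hu
    exact N4_nonneg n (by linarith [hu.1]) (by linarith [hu.2])
  have h3 : 0 ≤ ∫ τ in (4*(n:ℝ)+1/2)..(4*(n:ℝ)+1), N4 τ := by
    apply intervalIntegral.integral_nonneg (by linarith)
    intro u hu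
    exact N4_nonneg n (by linarith [hu.1]) (by linarith [hu.2])
  have h2 : Real.sqrt 2 / 2 * Real.exp ((4*(n:ℝ) - 1/2)^2) ≤
      ∫ τ in (4*(n:ℝ)-1/2)..(4*(n:ℝ)+1/2), N4 τ := by
    have := intervalIntegral.integral_mono_on (a := 4*(n:ℝ)-1/2) (b := 4*(n:ℝ)+1/2)
      (f := fun _ => Real.sqrt 2 / 2 * Real.exp ((4*(n:ℝ) - 1/2)^2)) (g := N4)
      (by linarith) (intervalIntegrable_const) (N4_int _ _)
      (fun x hx => N4_big n hn hx.1 hx.2)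
    rw [intervalIntegral.integral_const] at this
    have heq : ((4*(n:ℝ)+1/2) - (4*(n:ℝ)-1/2)) = 1 := by ring
    rw [heq, one_smul] at this
    exact this
  linarith

-- N4 is nonpos on [4n+1, 4n+3]
lemma N4_nonpos (n : ℕ) {τ : ℝ} (h1 : 4*(n:ℝ) + 1 ≤ τ) (h2 : τ ≤ 4*(n:ℝ) + 3) :
    N4 τ ≤ 0 := by
  unfold N4
  have hτ : Real.pi * τ / 2 = Real.pi * (τ - 4*n - 2) / 2 + Real.pi + n * (2*Real.pi) := by ring
  rw [hτ, Real.cos_add_nat_mul_two_pi, Real.cos_add_pi]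
  have : |τ - 4*(n:ℝ) - 2| ≤ 1 := by rw [abs_le]; constructor <;> linarith
  have := cos_nonneg_unit this
  nlinarith [Real.exp_nonneg (τ^2)]

lemma N4_small (n : ℕ) (hn : 1 ≤ n) {τ : ℝ} (h1 : 4*(n:ℝ) + 3/2 ≤ τ) (h2 : τ ≤ 4*(n:ℝ) + 5/2) :
    N4 τ ≤ -(Real.sqrt 2 / 2 * Real.exp ((4*(n:ℝ) + 3/2)^2)) := by
  have hn' : (1:ℝ) ≤ (n:ℝ) := by exact_mod_cast hn
  unfold N4
  have hτ : Real.pi * τ / 2 = Real.pi * (τ - 4*n - 2) / 2 + Real.pi + n * (2*Real.pi) := by ring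
  rw [hτ, Real.cos_add_nat_mul_two_pi, Real.cos_add_pi]
  have hc : Real.sqrt 2 / 2 ≤ Real.cos (Real.pi * (τ - 4*(n:ℝ) - 2) / 2) := by
    apply cos_quarter
    rw [abs_le]; constructor <;> linarith
  have he : Real.exp ((4*(n:ℝ) + 3/2)^2) ≤ Real.exp (τ^2) := by
    apply Real.exp_le_exp.2
    nlinarith
  nlinarith [Real.exp_pos (τ^2), sqrt2_half_pos]

lemma hump_neg (n : ℕ) (hn : 1 ≤ n) :
    (∫ τ in (4*(n:ℝ)+1)..(4*(n:ℝ)+3), N4 τ) ≤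
      -(Real.sqrt 2 / 2 * Real.exp ((4*(n:ℝ) + 3/2)^2)) := by
  have hs : ∫ τ in (4*(n:ℝ)+1)..(4*(n:ℝ)+3), N4 τ =
      (∫ τ in (4*(n:ℝ)+1)..(4*(n:ℝ)+3/2), N4 τ) +
      (∫ τ in (4*(n:ℝ)+3/2)..(4*(n:ℝ)+5/2), N4 τ) +
      (∫ τ in (4*(n:ℝ)+5/2)..(4*(n:ℝ)+3), N4 τ) := by
    rw [intervalIntegral.integral_add_adjacent_intervals (N4_int _ _) (N4_int _ _),
        intervalIntegral.integral_add_adjacent_intervals (N4_int _ _) (N4_int _ _)]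
  have h1 : (∫ τ in (4*(n:ℝ)+1)..(4*(n:ℝ)+3/2), N4 τ) ≤ 0 := by
    have : (0:ℝ) ≤ ∫ τ in (4*(n:ℝ)+1)..(4*(n:ℝ)+3/2), -N4 τ := by
      apply intervalIntegral.integral_nonneg (by linarith)
      intro u hu
      simpa using N4_nonpos n (by linarith [hu.1]) (by linarith [hu.2])
    simp only [intervalIntegral.integral_neg] at this
    linarith
  have h3 : (∫ τ in (4*(n:ℝ)+5/2)..(4*(n:ℝ)+3), N4 τ) ≤ 0 := by
    have : (0:ℝ) ≤ ∫ τ in (4*(n:ℝ)+5/2)..(4*(n:ℝ)+3), -N4 τ := by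
      apply intervalIntegral.integral_nonneg (by linarith)
      intro u hu
      simpa using N4_nonpos n (by linarith [hu.1]) (by linarith [hu.2])
    simp only [intervalIntegral.integral_neg] at this
    linarith
  have h2 : (∫ τ in (4*(n:ℝ)+3/2)..(4*(n:ℝ)+5/2), N4 τ) ≤
      -(Real.sqrt 2 / 2 * Real.exp ((4*(n:ℝ) + 3/2)^2)) := by
    have := intervalIntegral.integral_mono_on (a := 4*(n:ℝ)+3/2) (b := 4*(n:ℝ)+5/2)
      (f := N4) (g := fun _ => -(Real.sqrt 2 / 2 * Real.exp ((4*(n:ℝ) + 3/2)^2)))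
      (by linarith) (N4_int _ _) (intervalIntegrable_const)
      (fun x hx => N4_small n hn hx.1 hx.2)
    rw [intervalIntegral.integral_const] at this
    have heq : ((4*(n:ℝ)+5/2) - (4*(n:ℝ)+3/2)) = 1 := by ring
    rw [heq, one_smul] at this
    exact this
  linarith

lemma arith_key (k₀ M a : ℝ) (h1 : |k₀| + 1 ≤ a) (h2 : 32*(1+|M|) ≤ a) :
    |M| * (a + 2 - k₀) + (a - k₀) + 1 ≤ Real.sqrt 2 / 2 * Real.exp (a + 1/4) := by
  have hM : 0 ≤ |M| := abs_nonneg M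
  have hk : 0 ≤ |k₀| := abs_nonneg k₀
  have ha : (32:ℝ) ≤ a := by linarith
  have h3 : 1 + a/2 ≤ Real.exp (a/2) := by linarith [Real.add_one_le_exp (a/2)]
  have h4 : (1 + a/2)^2 ≤ Real.exp a := by
    have he : Real.exp a = Real.exp (a/2) * Real.exp (a/2) := by
      rw [← Real.exp_add]; ring_nf
    nlinarith [Real.exp_pos (a/2)]
  have h5 : Real.exp a ≤ Real.exp (a + 1/4) := Real.exp_le_exp.2 (by linarith)
  have h6 : (1:ℝ) ≤ Real.sqrt 2 := by
    rw [show (1:ℝ) = Real.sqrt 1 from Real.sqrt_one.symm]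
    exact Real.sqrt_le_sqrt (by norm_num)
  have hk2 : -(a-1) ≤ k₀ := by linarith [neg_abs_le k₀]
  nlinarith [mul_nonneg (sub_nonneg.2 h2) (by linarith : (0:ℝ) ≤ a),
    mul_nonneg hM (by linarith : (0:ℝ) ≤ a), Real.exp_pos (a+1/4)]

lemma prefix_bound (k₀ a : ℝ) (h : |k₀| ≤ a) :
    |∫ τ in k₀..a, N4 τ| ≤ (a - k₀) * Real.exp (a^2) := by
  have hka : k₀ ≤ a := le_trans (le_abs_self k₀) h
  have hb := intervalIntegral.norm_integral_le_of_norm_le_const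
    (C := Real.exp (a^2)) (f := N4) (a := k₀) (b := a) ?_
  · rw [Real.norm_eq_abs] at hb
    calc |∫ τ in k₀..a, N4 τ| ≤ Real.exp (a^2) * |a - k₀| := hb
      _ = (a - k₀) * Real.exp (a^2) := by
          rw [abs_of_nonneg (by linarith)]; ring
  · intro x hx
    rw [Set.uIoc_of_le hka] at hx
    have hx1 : -a ≤ x := by linarith [neg_abs_le k₀, hx.1]
    have hx2 : x ≤ a := hx.2
    have hsq : x^2 ≤ a^2 := sq_le_sq' hx1 hx2
    have he : Real.exp (x^2) ≤ Real.exp (a^2) := Real.exp_le_exp.2 hsq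
    have hc : |Real.cos (Real.pi * x / 2)| ≤ 1 := Real.abs_cos_le_one _
    unfold N4
    rw [Real.norm_eq_abs, abs_mul, Real.abs_exp]
    nlinarith [Real.exp_pos (x^2), abs_nonneg (Real.cos (Real.pi * x / 2))]

theorem stmt_3 (k₀ : ℝ) (M : ℝ) :
    (∃ k > k₀, (1 / (k - k₀)) * ∫ τ in k₀..k, Real.cos (Real.pi * τ / 2) * Real.exp (τ ^ 2) > M) ∧
    (∃ k > k₀, (1 / (k - k₀)) * ∫ τ in k₀..k, Real.cos (Real.pi * τ / 2) * Real.exp (τ ^ 2) < M) := by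
  show (∃ k > k₀, (1 / (k - k₀)) * ∫ τ in k₀..k, N4 τ > M) ∧
    (∃ k > k₀, (1 / (k - k₀)) * ∫ τ in k₀..k, N4 τ < M)
  obtain ⟨n, hn⟩ := exists_nat_gt ((|k₀| + 32*(1+|M|) + 8)/4)
  have hM : 0 ≤ |M| := abs_nonneg M
  have hk0 : 0 ≤ |k₀| := abs_nonneg k₀
  have hn4 : |k₀| + 32*(1+|M|) + 8 < 4*(n:ℝ) := by linarith
  have hn1 : 1 ≤ n := by
    have : (1:ℝ) ≤ (n:ℝ) := by linarith
    exact_mod_cast this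
  have hE1 : ∀ b : ℝ, (1:ℝ) ≤ Real.exp (b^2) := fun b => Real.one_le_exp (sq_nonneg b)
  constructor
  · -- positive side: k = 4n+1, a = 4n-1
    set a : ℝ := 4*(n:ℝ) - 1 with ha_def
    set k : ℝ := 4*(n:ℝ) + 1 with hk_def
    have hak : |k₀| + 1 ≤ a := by simp only [ha_def]; linarith
    have ha32 : 32*(1+|M|) ≤ a := by simp only [ha_def]; linarith
    have hkk : 0 < k - k₀ := by
      have := le_abs_self k₀; simp only [hk_def]; linarith
    refine ⟨k, by linarith, ?_⟩
    have hsplit : (∫ τ in k₀..a, N4 τ) + (∫ τ in a..k, N4 τ) = ∫ τ in k₀..k, N4 τ :=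
      intervalIntegral.integral_add_adjacent_intervals (N4_int _ _) (N4_int _ _)
    have hpre := prefix_bound k₀ a (by linarith)
    have hhump : Real.sqrt 2 / 2 * Real.exp ((4*(n:ℝ) - 1/2)^2) ≤ ∫ τ in a..k, N4 τ := by
      simpa only [ha_def, hk_def] using hump_pos n hn1
    have hexp : Real.exp ((4*(n:ℝ) - 1/2)^2) = Real.exp (a^2) * Real.exp (a + 1/4) := by
      rw [← Real.exp_add]; congr 1; simp only [ha_def]; ring
    have harith := arith_key k₀ M a hak ha32
    set E : ℝ := Real.exp (a^2) with hE_def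
    set A : ℝ := Real.sqrt 2 / 2 * Real.exp (a + 1/4) - (a - k₀) with hA_def
    clear_value a k E A
    have hA1 : |M| * (k - k₀) + 1 ≤ A := by
      have : k - k₀ = a + 2 - k₀ := by simp only [ha_def, hk_def]; ring
      rw [this, hA_def]; linarith
    have hApos : 1 ≤ A := by nlinarith [mul_nonneg hM hkk.le]
    have hF : E * A ≤ ∫ τ in k₀..k, N4 τ := by
      rw [← hsplit]
      have h1 : -((a - k₀) * E) ≤ ∫ τ in k₀..a, N4 τ := by
        have := abs_le.1 hpre; linarith [this.1]
      have h2 : Real.sqrt 2 / 2 * (E * Real.exp (a + 1/4)) ≤ ∫ τ in a..k, N4 τ := by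
        rw [hexp] at hhump; linarith
      have : E * A = -((a - k₀) * E) + Real.sqrt 2 / 2 * (E * Real.exp (a + 1/4)) := by
        rw [hA_def]; ring
      linarith
    have hEA : A ≤ E * A := le_mul_of_one_le_left (by linarith) (hE_def ▸ hE1 a)
    have hMk : M * (k - k₀) ≤ |M| * (k - k₀) :=
      mul_le_mul_of_nonneg_right (le_abs_self M) hkk.le
    rw [gt_iff_lt, one_div, inv_mul_eq_div, lt_div_iff₀ hkk]
    linarith
  · -- negative side: k = 4n+3, a = 4n+1
    set a : ℝ := 4*(n:ℝ) + 1 with ha_def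
    set k : ℝ := 4*(n:ℝ) + 3 with hk_def
    have hak : |k₀| + 1 ≤ a := by simp only [ha_def]; linarith
    have ha32 : 32*(1+|M|) ≤ a := by simp only [ha_def]; linarith
    have hkk : 0 < k - k₀ := by
      have := le_abs_self k₀; simp only [hk_def]; linarith
    refine ⟨k, by linarith, ?_⟩
    have hsplit : (∫ τ in k₀..a, N4 τ) + (∫ τ in a..k, N4 τ) = ∫ τ in k₀..k, N4 τ :=
      intervalIntegral.integral_add_adjacent_intervals (N4_int _ _) (N4_int _ _)
    have hpre := prefix_bound k₀ a (by linarith)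
    have hhump : (∫ τ in a..k, N4 τ) ≤ -(Real.sqrt 2 / 2 * Real.exp ((4*(n:ℝ) + 3/2)^2)) := by
      simpa only [ha_def, hk_def] using hump_neg n hn1
    have hexp : Real.exp ((4*(n:ℝ) + 3/2)^2) = Real.exp (a^2) * Real.exp (a + 1/4) := by
      rw [← Real.exp_add]; congr 1; simp only [ha_def]; ring
    have harith := arith_key k₀ M a hak ha32
    set E : ℝ := Real.exp (a^2) with hE_def
    set A : ℝ := Real.sqrt 2 / 2 * Real.exp (a + 1/4) - (a - k₀) with hA_def
    clear_value a k E A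
    have hA1 : |M| * (k - k₀) + 1 ≤ A := by
      have : k - k₀ = a + 2 - k₀ := by simp only [ha_def, hk_def]; ring
      rw [this, hA_def]; linarith
    have hApos : 1 ≤ A := by nlinarith [mul_nonneg hM hkk.le]
    have hF : (∫ τ in k₀..k, N4 τ) ≤ -(E * A) := by
      rw [← hsplit]
      have h1 : (∫ τ in k₀..a, N4 τ) ≤ (a - k₀) * E := by
        have := abs_le.1 hpre; linarith [this.2]
      have h2 : (∫ τ in a..k, N4 τ) ≤ -(Real.sqrt 2 / 2 * (E * Real.exp (a + 1/4))) := by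
        rw [hexp] at hhump; linarith
      have : -(E * A) = (a - k₀) * E + -(Real.sqrt 2 / 2 * (E * Real.exp (a + 1/4))) := by
        rw [hA_def]; ring
      linarith
    have hEA : A ≤ E * A := le_mul_of_one_le_left (by linarith) (hE_def ▸ hE1 a)
    have hMk : -M * (k - k₀) ≤ |M| * (k - k₀) :=
      mul_le_mul_of_nonneg_right (neg_le_abs M) hkk.le
    rw [one_div, inv_mul_eq_div, div_lt_iff₀ hkk]
    linarith
end
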